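/- Let n ≥ 1, G = ℝⁿ \ {0}, x ∈ G, and r ∈ (0,1). Then B(x, (2r/(1+r))·|x|) ⊆ B_s(x,r) ⊆ B(x, (2r/(1−r))·|x|), where B denotes open Euclidean balls. Moreover both inclusions are sharp: the point y₁ = (1 − 2r/(1+r))·x satisfies |x − y₁| = (2r/(1+r))·|x| and s_G(x, y₁) = r, and the point y₂ = (1 + 2r/(1−r))·x satisfies |x − y₂| = (2r/(1−r))·|x| and s_G(x, y₂) = r. -/
import Mathlib


/-- The triangular ratio metric `s_G(x,y) = sup_{z ∈ ∂G} |x−y|/(|z−x|+|z−y|)`. -/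
noncomputable def sMetric {n : ℕ} (G : Set (EuclideanSpace ℝ (Fin n)))
    (x y : EuclideanSpace ℝ (Fin n)) : ℝ :=
  ⨆ z ∈ frontier G, dist x y / (dist z x + dist z y)

/-- The metric ball `B_s(x,r) = {y ∈ G : s_G(x,y) < r}`. -/
def sBall {n : ℕ} (G : Set (EuclideanSpace ℝ (Fin n))) (x : EuclideanSpace ℝ (Fin n))
    (r : ℝ) : Set (EuclideanSpace ℝ (Fin n)) :=
  {y ∈ G | sMetric G x y < r}

lemma biSup_singleton_real {α : Type*} (a : α) (f : α → ℝ) (hf : 0 ≤ f a) :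
    (⨆ z ∈ ({a} : Set α), f z) = f a := by
  classical
  have hne : Nonempty α := ⟨a⟩
  have h1 : ∀ z : α, (⨆ _ : z ∈ ({a}:Set α), f z) = if z = a then f a else 0 := by
    intro z; by_cases h : z = a
    · subst h; rw [ciSup_pos (Set.mem_singleton _), if_pos rfl]
    · rw [if_neg h]
      have : IsEmpty (z ∈ ({a}:Set α)) := ⟨fun hz => h hz⟩
      rw [iSup_of_empty', Real.sSup_empty]
  simp only [h1]
  apply le_antisymm
  · apply ciSup_le; intro z; split_ifs <;> simp [hf]
  · refine le_ciSup_of_le ⟨max (f a) 0, ?_⟩ a (by simp)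
    rintro y ⟨z, rfl⟩; dsimp only; split_ifs <;> simp

lemma frontier_punctured {n : ℕ} (hn : 1 ≤ n) :
    frontier ({0}ᶜ : Set (EuclideanSpace ℝ (Fin n))) = {0} := by
  have : Nonempty (Fin n) := ⟨⟨0, hn⟩⟩
  rw [frontier_compl, IsClosed.frontier_eq isClosed_singleton,
    interior_eq_empty_iff_dense_compl.2
      (dense_compl_singleton (0 : EuclideanSpace ℝ (Fin n))), Set.diff_empty]

lemma sMetric_punctured {n : ℕ} (hn : 1 ≤ n) (x y : EuclideanSpace ℝ (Fin n)) :
    sMetric ({0}ᶜ : Set (EuclideanSpace ℝ (Fin n))) x y = dist x y / (‖x‖ + ‖y‖) := by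
  rw [sMetric, frontier_punctured hn,
    biSup_singleton_real 0 (fun z => dist x y / (dist z x + dist z y))
      (div_nonneg dist_nonneg (by positivity))]
  simp [dist_zero_left]

/-- Let n ≥ 1, G = ℝⁿ \ {0}, x ∈ G, and r ∈ (0,1). Then
B(x, (2r/(1+r))·|x|) ⊆ B_s(x,r) ⊆ B(x, (2r/(1−r))·|x|), and both inclusions are sharp:
y₁ = (1 − 2r/(1+r))·x satisfies |x − y₁| = (2r/(1+r))·|x| and s_G(x, y₁) = r, and
y₂ = (1 + 2r/(1−r))·x satisfies |x − y₂| = (2r/(1−r))·|x| and s_G(x, y₂) = r. -/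
theorem ball_subset_sBall_punctured_sharp (n : ℕ) (hn : 1 ≤ n)
    (x : EuclideanSpace ℝ (Fin n)) (hx : x ≠ 0) (r : ℝ) (hr : r ∈ Set.Ioo (0:ℝ) 1) :
    Metric.ball x (2 * r / (1 + r) * ‖x‖) ⊆
      sBall ({0}ᶜ : Set (EuclideanSpace ℝ (Fin n))) x r ∧
    sBall ({0}ᶜ : Set (EuclideanSpace ℝ (Fin n))) x r ⊆
      Metric.ball x (2 * r / (1 - r) * ‖x‖) ∧
    (dist x ((1 - 2 * r / (1 + r)) • x) = 2 * r / (1 + r) * ‖x‖ ∧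
      sMetric ({0}ᶜ : Set (EuclideanSpace ℝ (Fin n))) x ((1 - 2 * r / (1 + r)) • x) = r) ∧
    (dist x ((1 + 2 * r / (1 - r)) • x) = 2 * r / (1 - r) * ‖x‖ ∧
      sMetric ({0}ᶜ : Set (EuclideanSpace ℝ (Fin n))) x ((1 + 2 * r / (1 - r)) • x) = r) := by
  obtain ⟨hr0, hr1⟩ := hr
  have hx0 : (0:ℝ) < ‖x‖ := norm_pos_iff.2 hx
  have h1r : (0:ℝ) < 1 + r := by linarith
  have h1r' : (0:ℝ) < 1 - r := by linarith
  have key : ∀ t : ℝ, dist x (t • x) = |1 - t| * ‖x‖ := by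
    intro t
    rw [dist_eq_norm, show x - t • x = (1 - t) • x by rw [sub_smul, one_smul],
      norm_smul, Real.norm_eq_abs]
  refine ⟨?_, ?_, ?_, ?_⟩
  · -- first inclusion
    intro y hy
    rw [Metric.mem_ball, dist_comm, div_mul_eq_mul_div, lt_div_iff₀ h1r] at hy
    have hxy : ‖x‖ ≤ dist x y + ‖y‖ := by
      calc ‖x‖ = dist x 0 := (dist_zero_right x).symm
        _ ≤ dist x y + dist y 0 := dist_triangle _ _ _
        _ = dist x y + ‖y‖ := by rw [dist_zero_right]
    have hy0 : (0:ℝ) < ‖y‖ := by nlinarith [dist_nonneg (x := x) (y := y)]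
    refine ⟨by simpa using norm_pos_iff.1 hy0, ?_⟩
    rw [sMetric_punctured hn, div_lt_iff₀ (by positivity)]
    nlinarith [dist_nonneg (x := x) (y := y),
      mul_nonneg hr0.le (by linarith : (0:ℝ) ≤ dist x y + ‖y‖ - ‖x‖)]
  · -- second inclusion
    rintro y ⟨hyG, hys⟩
    rw [sMetric_punctured hn, div_lt_iff₀ (by positivity)] at hys
    have hyx : ‖y‖ ≤ ‖x‖ + dist x y := by
      calc ‖y‖ = dist y 0 := (dist_zero_right y).symm
        _ ≤ dist y x + dist x 0 := dist_triangle _ _ _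
        _ = ‖x‖ + dist x y := by rw [dist_zero_right, dist_comm]; ring
    rw [Metric.mem_ball, dist_comm, div_mul_eq_mul_div, lt_div_iff₀ h1r']
    nlinarith [mul_nonneg hr0.le (by linarith : (0:ℝ) ≤ ‖x‖ + dist x y - ‖y‖)]
  · -- sharpness of first inclusion
    have h2 : (0:ℝ) ≤ 1 - 2 * r / (1 + r) := by
      rw [sub_nonneg, div_le_one h1r]; linarith
    have habs1 : |1 - (1 - 2 * r / (1 + r))| = 2 * r / (1 + r) := by
      rw [show (1:ℝ) - (1 - 2 * r / (1 + r)) = 2 * r / (1 + r) by ring]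
      exact abs_of_nonneg (by positivity)
    constructor
    · rw [key, habs1]
    · rw [sMetric_punctured hn, key, norm_smul, Real.norm_eq_abs, abs_of_nonneg h2, habs1]
      have hden : ‖x‖ + (1 - 2 * r / (1 + r)) * ‖x‖ ≠ 0 := by
        nlinarith [mul_nonneg h2 hx0.le]
      rw [div_eq_iff hden]
      field_simp
      ring
  · -- sharpness of second inclusion
    have h2 : (0:ℝ) ≤ 1 + 2 * r / (1 - r) := by positivity
    have habs2 : |1 - (1 + 2 * r / (1 - r))| = 2 * r / (1 - r) := by
      rw [show (1:ℝ) - (1 + 2 * r / (1 - r)) = -(2 * r / (1 - r)) by ring, abs_neg]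
      exact abs_of_nonneg (by positivity)
    constructor
    · rw [key, habs2]
    · rw [sMetric_punctured hn, key, norm_smul, Real.norm_eq_abs, abs_of_nonneg h2, habs2]
      have hden : ‖x‖ + (1 + 2 * r / (1 - r)) * ‖x‖ ≠ 0 := by positivity
      rw [div_eq_iff hden]
      field_simp
      ring
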